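/- The regular language L = b*ab* + b* = { bⁱabʲ : i,j ≥ 0 } ∪ { bⁱ : i ≥ 0 } over the alphabet {a,b} is not accepted by any state-deterministic sensing 5'→3' WK automaton, but L is accepted by a quasi-deterministic sensing 5'→3' WK automaton (e.g., a DFA regarded as a sensing 5'→3' WK automaton whose second head never reads). -/

import Mathlib

open Computability

/-- The two-letter alphabet `{a, b}`. -/
inductive Letter : Type
  | a : Letter
  | b : Letter
deriving DecidableEq

instance : Fintype Letter :=
  ⟨{Letter.a, Letter.b}, fun x => by cases x <;> simp⟩

open Letter

/-- A sensing 5'→3' Watson-Crick automaton over the alphabet `T` with state set `Q`: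
an initial state `q0`, a set `F` of final states, and a transition mapping
`δ : Q × T* × T* → 2^Q` that is nonempty for only finitely many triples. -/
structure WKAutomaton (T : Type) (Q : Type) where
  q0 : Q
  F : Set Q
  δ : Q → List T → List T → Set Q
  finite_delta : {t : Q × List T × List T | (δ t.1 t.2.1 t.2.2).Nonempty}.Finite

namespace WKAutomaton

variable {T Q : Type}

/-- One computation step on configurations:
`(q, x ++ w' ++ y) ⇒ (q', w')` iff `q' ∈ δ q x y`. -/
def Step (A : WKAutomaton T Q) (c c' : Q × List T) : Prop :=
  ∃ x y : List T, c.2 = x ++ c'.2 ++ y ∧ c'.1 ∈ A.δ c.1 x y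

/-- The accepted language: words `w` with `(q₀, w) ⇒* (q_F, λ)` for some final `q_F`. -/
def Lang (A : WKAutomaton T Q) : Set (List T) :=
  {w | ∃ qf ∈ A.F, Relation.ReflTransGen A.Step (A.q0, w) (qf, [])}

/-- `A` is deterministic: in every configuration at most one computation step
(choice of `x`, `y`, `w'`, `q'`) is applicable. -/
def Deterministic (A : WKAutomaton T Q) : Prop :=
  ∀ (q : Q) (w x₁ y₁ w₁ x₂ y₂ w₂ : List T) (q₁ q₂ : Q),
    w = x₁ ++ w₁ ++ y₁ → q₁ ∈ A.δ q x₁ y₁ →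
    w = x₂ ++ w₂ ++ y₂ → q₂ ∈ A.δ q x₂ y₂ →
    x₁ = x₂ ∧ y₁ = y₂ ∧ w₁ = w₂ ∧ q₁ = q₂

/-- `A` is quasi-deterministic: for every configuration `(q,w)`, whenever
`(q,w) ⇒ (p,u)` and `(q,w) ⇒ (r,v)`, it holds that `p = r`. -/
def QuasiDet (A : WKAutomaton T Q) : Prop :=
  ∀ (q : Q) (w : List T) (p r : Q) (u v : List T),
    A.Step (q, w) (p, u) → A.Step (q, w) (r, v) → p = r

/-- `A` is state-deterministic: for every state `q` there is at most one state `p`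
with `p ∈ δ(q,u,v)` for some words `u`, `v`. -/
def StateDet (A : WKAutomaton T Q) : Prop :=
  ∀ (q p₁ p₂ : Q) (u₁ v₁ u₂ v₂ : List T),
    p₁ ∈ A.δ q u₁ v₁ → p₂ ∈ A.δ q u₂ v₂ → p₁ = p₂

/-- `A` is stateless: `Q = F = {q₀}`. -/
def Stateless (A : WKAutomaton T Q) : Prop :=
  (∀ q : Q, q = A.q0) ∧ A.F = {A.q0}

/-- `A` is all-final: `Q = F`. -/
def AllFinal (A : WKAutomaton T Q) : Prop := A.F = Set.univ

/-- `A` is simple: at most one head reads in each step. -/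
def Simple (A : WKAutomaton T Q) : Prop :=
  ∀ (q : Q) (u v : List T), (A.δ q u v).Nonempty → u = [] ∨ v = []

/-- `A` is 1-limited: exactly one letter is read in each step. -/
def OneLimited (A : WKAutomaton T Q) : Prop :=
  ∀ (q : Q) (u v : List T), (A.δ q u v).Nonempty →
    (u = [] ∧ v.length = 1) ∨ (u.length = 1 ∧ v = [])

end WKAutomaton

/-- Equality of languages modulo the empty word. -/
def EqModLambda {T : Type} (L₁ L₂ : Set (List T)) : Prop :=
  ∀ w : List T, w ≠ [] → (w ∈ L₁ ↔ w ∈ L₂)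

/-- `L` is accepted (modulo the empty word) by some sensing 5'→3' WK automaton
with a finite state set satisfying the property `P`. -/
def AcceptsWith (T : Type) (P : ∀ Q : Type, WKAutomaton T Q → Prop)
    (L : Set (List T)) : Prop :=
  ∃ (Q : Type) (_ : Finite Q) (A : WKAutomaton T Q), P Q A ∧ EqModLambda A.Lang L

/-- The language `b*ab* + b*`. -/
def Lbabb : Set (List Letter) :=
  {w | (∃ i j : ℕ, w = List.replicate i b ++ a :: List.replicate j b) ∨
       (∃ i : ℕ, w = List.replicate i b)}

/-! ### Auxiliary machinery: runs as lists of read pairs -/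

namespace WKAux

open WKAutomaton

variable {T Q : Type}

/-- The word consumed by a list of read pairs. -/
def wordOf : List (List T × List T) → List T
  | [] => []
  | (x, y) :: l => x ++ wordOf l ++ y

/-- The concatenation of the left parts of the pairs. -/
def lhs : List (List T × List T) → List T
  | [] => []
  | (x, _) :: l => x ++ lhs l

/-- The (reversed) concatenation of the right parts of the pairs. -/
def rhs : List (List T × List T) → List T
  | [] => []
  | (_, y) :: l => rhs l ++ y

/-- `IsRun A l q p` : reading the pairs in `l` one after the other leads from
state `q` to state `p`. -/
def IsRun (A : WKAutomaton T Q) : List (List T × List T) → Q → Q → Prop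
  | [], q, p => p = q
  | (x, y) :: l, q, p => ∃ r, r ∈ A.δ q x y ∧ IsRun A l r p

lemma rtg_of_isRun (A : WKAutomaton T Q) :
    ∀ (l : List (List T × List T)) (q p : Q), IsRun A l q p →
      Relation.ReflTransGen A.Step (q, wordOf l) (p, []) := by
  intro l
  induction l with
  | nil => intro q p h; cases h; exact Relation.ReflTransGen.refl
  | cons e t ih =>
      obtain ⟨x, y⟩ := e
      rintro q p ⟨r, hr, hrun⟩
      exact Relation.ReflTransGen.head
        (show A.Step (q, wordOf ((x, y) :: t)) (r, wordOf t) from ⟨x, y, rfl, hr⟩)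
        (ih r p hrun)

lemma isRun_of_rtg (A : WKAutomaton T Q) (q p : Q) (w : List T)
    (h : Relation.ReflTransGen A.Step (q, w) (p, [])) :
    ∃ l, IsRun A l q p ∧ w = wordOf l := by
  have : ∀ c : Q × List T, Relation.ReflTransGen A.Step c (p, []) →
      ∃ l, IsRun A l c.1 p ∧ c.2 = wordOf l := by
    intro c hc
    induction hc using Relation.ReflTransGen.head_induction_on with
    | refl => exact ⟨[], rfl, rfl⟩
    | head hstep _ ih =>
        obtain ⟨x, y, hw, hmem⟩ := hstep
        obtain ⟨l, hl, hwl⟩ := ih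
        exact ⟨(x, y) :: l, ⟨_, hmem, hl⟩, by simp [wordOf, hw, hwl]⟩
  exact this (q, w) h

lemma mem_lang_iff (A : WKAutomaton T Q) (w : List T) :
    w ∈ A.Lang ↔ ∃ p ∈ A.F, ∃ l, IsRun A l A.q0 p ∧ w = wordOf l := by
  constructor
  · rintro ⟨p, hp, h⟩
    obtain ⟨l, h1, h2⟩ := isRun_of_rtg A _ p w h
    exact ⟨p, hp, l, h1, h2⟩
  · rintro ⟨p, hp, l, h1, rfl⟩
    exact ⟨p, hp, rtg_of_isRun A l _ p h1⟩

/-- Splicing two runs of a state-deterministic automaton. -/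
lemma splice (A : WKAutomaton T Q) (hsd : A.StateDet) :
    ∀ (n : ℕ) (l₁ l₂ : List (List T × List T)) (q p₁ p₂ : Q),
      IsRun A l₁ q p₁ → IsRun A l₂ q p₂ → n ≤ l₁.length → n ≤ l₂.length →
      IsRun A (l₁.take n ++ l₂.drop n) q p₂ := by
  intro n
  induction n with
  | zero => intro l₁ l₂ q p₁ p₂ h1 h2 _ _; simpa using h2
  | succ n ih =>
      rintro (_ | ⟨⟨x₁, y₁⟩, t₁⟩) (_ | ⟨⟨x₂, y₂⟩, t₂⟩) q p₁ p₂ h1 h2 hn1 hn2 <;>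
        simp at hn1 hn2
      obtain ⟨r₁, hr₁, hrun₁⟩ := h1
      obtain ⟨r₂, hr₂, hrun₂⟩ := h2
      have : r₁ = r₂ := hsd q r₁ r₂ _ _ _ _ hr₁ hr₂
      subst this
      exact ⟨r₁, hr₁, ih t₁ t₂ r₁ p₁ p₂ hrun₁ hrun₂ hn1 hn2⟩

lemma isRun_append (A : WKAutomaton T Q) :
    ∀ (u v : List (List T × List T)) (q r p : Q),
      IsRun A u q r → IsRun A v r p → IsRun A (u ++ v) q p := by
  intro u
  induction u with
  | nil => intro v q r p h1 h2; cases h1; exact h2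
  | cons e t ih =>
      obtain ⟨x, y⟩ := e
      rintro v q r p ⟨s, hs, h1⟩ h2
      exact ⟨s, hs, ih v s r p h1 h2⟩

lemma isRun_pairs (A : WKAutomaton T Q) :
    ∀ (l : List (List T × List T)) (q p : Q), IsRun A l q p →
      ∀ e ∈ l, ∃ q', (A.δ q' e.1 e.2).Nonempty := by
  intro l
  induction l with
  | nil => simp
  | cons x t ih =>
      obtain ⟨x1, y1⟩ := x
      rintro q p ⟨r, hr, hrun⟩ e he
      rcases List.mem_cons.1 he with rfl | he
      · exact ⟨q, r, hr⟩
      · exact ih r p hrun e he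

lemma wordOf_append (u v : List (List T × List T)) :
    wordOf (u ++ v) = lhs u ++ wordOf v ++ rhs u := by
  induction u with
  | nil => simp [lhs, rhs, wordOf]
  | cons e t ih =>
      obtain ⟨x, y⟩ := e
      simp [lhs, rhs, wordOf, ih]

lemma count_wordOf [DecidableEq T] (c : T) (l : List (List T × List T)) :
    (wordOf l).count c = (l.map fun e => e.1.count c + e.2.count c).sum := by
  induction l with
  | nil => simp [wordOf]
  | cons e t ih =>
      obtain ⟨x, y⟩ := e
      simp [wordOf, List.count_append, ih]
      omega

lemma exists_split_of_sum_pos {α : Type} (f : α → ℕ) :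
    ∀ l : List α, 0 < (l.map f).sum → ∃ u e v, l = u ++ e :: v ∧ 0 < f e := by
  intro l
  induction l with
  | nil => simp
  | cons x t ih =>
      intro h
      by_cases hx : 0 < f x
      · exact ⟨[], x, t, rfl, hx⟩
      · simp at h
        obtain ⟨u, e, v, rfl, he⟩ := ih (by omega)
        exact ⟨x :: u, e, v, rfl, he⟩

lemma lhs_length_le (M : ℕ) : ∀ u : List (List T × List T),
    (∀ e ∈ u, e.1.length ≤ M) → (lhs u).length ≤ u.length * M := by
  intro u
  induction u with
  | nil => simp [lhs]
  | cons e t ih =>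
      intro h
      obtain ⟨x, y⟩ := e
      have h1 := h (x, y) (by simp)
      have h2 := ih fun e he => h e (by simp [he])
      simp [lhs, Nat.succ_mul] at *
      omega

lemma rhs_length_le (M : ℕ) : ∀ u : List (List T × List T),
    (∀ e ∈ u, e.2.length ≤ M) → (rhs u).length ≤ u.length * M := by
  intro u
  induction u with
  | nil => simp [rhs]
  | cons e t ih =>
      intro h
      obtain ⟨x, y⟩ := e
      have h1 := h (x, y) (by simp)
      have h2 := ih fun e he => h e (by simp [he])
      simp [rhs, Nat.succ_mul] at *
      omega

/-! ### The negative part -/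

lemma Lbabb_count {w : List Letter} (h : w ∈ Lbabb) : w.count a ≤ 1 := by
  rcases h with ⟨i, j, rfl⟩ | ⟨i, rfl⟩ <;>
    simp [List.count_append, List.count_replicate, List.count_cons]

/-- In a state-deterministic automaton accepting `Lbabb` (mod λ), two accepting runs
cannot contain an `a`-reading pair at two different positions. -/
lemma no_two_positions {Q : Type} (A : WKAutomaton Letter Q) (hsd : A.StateDet)
    (heq : EqModLambda A.Lang Lbabb)
    (u₁ v₁ u₂ v₂ : List (List Letter × List Letter)) (e₁ e₂ : List Letter × List Letter)
    (p₁ p₂ : Q) (hp₁ : p₁ ∈ A.F) (hp₂ : p₂ ∈ A.F)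
    (h₁ : IsRun A (u₁ ++ e₁ :: v₁) A.q0 p₁) (h₂ : IsRun A (u₂ ++ e₂ :: v₂) A.q0 p₂)
    (he₁ : 0 < e₁.1.count a + e₁.2.count a) (he₂ : 0 < e₂.1.count a + e₂.2.count a)
    (hlt : u₁.length < u₂.length) : False := by
  set n := u₁.length + 1 with hn
  have hn1 : n ≤ (u₁ ++ e₁ :: v₁).length := by
    simp only [List.length_append, List.length_cons]; omega
  have hn2 : n ≤ (u₂ ++ e₂ :: v₂).length := by
    simp only [List.length_append, List.length_cons]; omega
  have hrun := splice A hsd n _ _ _ _ _ h₁ h₂ hn1 hn2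
  have htake : (u₁ ++ e₁ :: v₁).take n = u₁ ++ [e₁] := by
    rw [List.take_append, List.take_of_length_le (by omega)]
    simp [hn]
  have hdrop : (u₂ ++ e₂ :: v₂).drop n = u₂.drop n ++ e₂ :: v₂ := by
    rw [List.drop_append, Nat.sub_eq_zero_of_le (by omega)]
    simp
  rw [htake, hdrop] at hrun
  set l₃ := (u₁ ++ [e₁]) ++ (u₂.drop n ++ e₂ :: v₂) with hl₃
  have hcnt : 2 ≤ (wordOf l₃).count a := by
    rw [count_wordOf]
    simp [hl₃]
    omega
  have hne : wordOf l₃ ≠ [] := by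
    intro h; rw [h] at hcnt; simp at hcnt
  have hmem : wordOf l₃ ∈ A.Lang := (mem_lang_iff A _).2 ⟨p₂, hp₂, l₃, hrun, rfl⟩
  have := Lbabb_count ((heq _ hne).1 hmem)
  omega

lemma not_stateDet : ¬ AcceptsWith Letter (fun _ A => A.StateDet) Lbabb := by
  rintro ⟨Q, hQfin, A, hsd, heq⟩
  -- a global bound on the lengths of words read in a single step
  obtain ⟨M, hM⟩ := (A.finite_delta.image
    fun t => max t.2.1.length t.2.2.length).bddAbove
  have hbound : ∀ (q : Q) (x y : List Letter), (A.δ q x y).Nonempty →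
      x.length ≤ M ∧ y.length ≤ M := by
    intro q x y h
    have := hM (Set.mem_image_of_mem _ (show (q, x, y) ∈ _ from h))
    simp at this
    exact this
  -- an accepting run for the word [a]
  have ha : [a] ∈ A.Lang := (heq [a] (by simp)).2 (Or.inl ⟨0, 0, rfl⟩)
  obtain ⟨p₁, hp₁, la, hla, hwa⟩ := (mem_lang_iff A [a]).1 ha
  have hca : 0 < (la.map fun e => e.1.count a + e.2.count a).sum := by
    rw [← count_wordOf, ← hwa]; simp
  obtain ⟨u₁, e₁, v₁, rfl, he₁⟩ :=
    exists_split_of_sum_pos (fun e => e.1.count a + e.2.count a) la hca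
  set m := u₁.length with hm
  set C := (m + 1) * M + 1 with hC
  set w := List.replicate C b ++ a :: List.replicate C b with hw
  -- an accepting run for the word b^C a b^C
  have hwmem : w ∈ A.Lang := (heq w (by simp [hw])).2 (Or.inl ⟨C, C, rfl⟩)
  obtain ⟨p₂, hp₂, lw, hlw, hwlw⟩ := (mem_lang_iff A w).1 hwmem
  have hwcount : w.count a = 1 := by
    simp [hw, List.count_append, List.count_replicate, List.count_cons]
  have hcw : 0 < (lw.map fun e => e.1.count a + e.2.count a).sum := by
    rw [← count_wordOf, ← hwlw, hwcount]; omega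
  obtain ⟨u₂, e₂, v₂, rfl, he₂⟩ :=
    exists_split_of_sum_pos (fun e => e.1.count a + e.2.count a) lw hcw
  -- the a-reading pairs occur at the same position in both runs
  have hmm : u₂.length = m := by
    rcases Nat.lt_trichotomy u₂.length m with h | h | h
    · exact absurd (no_two_positions A hsd heq u₂ v₂ u₁ v₁ e₂ e₁ p₂ p₁ hp₂ hp₁
        hlw hla he₂ he₁ h) (by simp)
    · exact h
    · exact absurd (no_two_positions A hsd heq u₁ v₁ u₂ v₂ e₁ e₂ p₁ p₂ hp₁ hp₂
        hla hlw he₁ he₂ h) (by simp)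
  -- length bounds for the pairs of the b^C a b^C run
  have hpair : ∀ e ∈ u₂ ++ e₂ :: v₂, e.1.length ≤ M ∧ e.2.length ≤ M := by
    intro e he
    obtain ⟨q', hq'⟩ := isRun_pairs A _ _ _ hlw e he
    exact hbound q' e.1 e.2 hq'
  have hlu : (lhs u₂).length ≤ m * M := by
    rw [← hmm]
    exact lhs_length_le M u₂ fun e he => (hpair e (by simp [he])).1
  have hru : (rhs u₂).length ≤ m * M := by
    rw [← hmm]
    exact rhs_length_le M u₂ fun e he => (hpair e (by simp [he])).2
  have he21 : e₂.1.length ≤ M := (hpair e₂ (by simp)).1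
  have he22 : e₂.2.length ≤ M := (hpair e₂ (by simp)).2
  have hword : w = lhs u₂ ++ (e₂.1 ++ wordOf v₂ ++ e₂.2) ++ rhs u₂ := by
    rw [hwlw, wordOf_append]
    obtain ⟨x, y⟩ := e₂
    simp [wordOf]
  have hsucc : (m + 1) * M = m * M + M := Nat.succ_mul m M
  rcases (show 0 < e₂.1.count a ∨ 0 < e₂.2.count a by omega) with hcase | hcase
  · -- the a is read by the left head: it occurs within the first C letters
    have hWP : w = (lhs u₂ ++ e₂.1) ++ (wordOf v₂ ++ e₂.2 ++ rhs u₂) := by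
      rw [hword]; simp [List.append_assoc]
    have hPlen : (lhs u₂ ++ e₂.1).length ≤ C := by
      rw [List.length_append]; omega
    have hPa : 0 < (lhs u₂ ++ e₂.1).count a := by
      rw [List.count_append]; omega
    have hPtake : lhs u₂ ++ e₂.1 = w.take (lhs u₂ ++ e₂.1).length := by
      rw [hWP, List.take_left]
    rw [hPtake, hw, List.take_append_of_le_length (by simpa using hPlen),
      List.take_replicate] at hPa
    simp [List.count_replicate] at hPa
  · -- the a is read by the right head: it occurs within the last C letters
    have hWS : w = (lhs u₂ ++ (e₂.1 ++ wordOf v₂)) ++ (e₂.2 ++ rhs u₂) := by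
      rw [hword]; simp [List.append_assoc]
    have hlen : w.length
        = (lhs u₂ ++ (e₂.1 ++ wordOf v₂)).length + (e₂.2 ++ rhs u₂).length := by
      rw [hWS, List.length_append]
    have hwlen : w.length = 2 * C + 1 := by
      rw [hw]; simp [List.length_append]; omega
    have hSlen : (e₂.2 ++ rhs u₂).length ≤ m * M + M := by
      rw [List.length_append]; omega
    have hP'len : C + 1 ≤ (lhs u₂ ++ (e₂.1 ++ wordOf v₂)).length := by omega
    have htk : w.take (C + 1) = List.replicate C b ++ [a] := by
      rw [hw, List.take_append,
        List.take_of_length_le (by simp)]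
      simp
    have hPtk : (lhs u₂ ++ (e₂.1 ++ wordOf v₂)).take (C + 1)
        = List.replicate C b ++ [a] := by
      rw [← List.take_append_of_le_length hP'len, ← hWS, htk]
    have hcp : 0 < (lhs u₂ ++ (e₂.1 ++ wordOf v₂)).count a := by
      rw [← List.take_append_drop (C + 1) (lhs u₂ ++ (e₂.1 ++ wordOf v₂)),
        List.count_append, hPtk]
      simp [List.count_append, List.count_replicate]
    have hcs : 0 < (e₂.2 ++ rhs u₂).count a := by
      rw [List.count_append]; omega
    have hcsplit : w.count a
        = (lhs u₂ ++ (e₂.1 ++ wordOf v₂)).count a + (e₂.2 ++ rhs u₂).count a := by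
      rw [hWS, List.count_append]
    omega

/-! ### The positive part -/

/-- The transition table of the DFA for `b*ab* + b*`, regarded as a WK automaton. -/
def table : List (Bool × List Letter × List Letter × Bool) :=
  [(false, [b], [], false), (false, [a], [], true), (true, [b], [], true)]

/-- The DFA for `b*ab* + b*`, regarded as a sensing 5'→3' WK automaton whose
second head never reads. -/
def dfaWK : WKAutomaton Letter Bool where
  q0 := false
  F := Set.univ
  δ := fun q x y => {p | (q, x, y, p) ∈ table}
  finite_delta := by
    apply Set.Finite.subset ((table.map fun r => (r.1, r.2.1, r.2.2.1)).finite_toSet)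
    rintro ⟨q, x, y⟩ ⟨p, hp⟩
    exact List.mem_map.2 ⟨(q, x, y, p), hp, rfl⟩

lemma dfaWK_quasiDet : dfaWK.QuasiDet := by
  rintro q w p r u v ⟨x₁, y₁, hw₁, hm₁⟩ ⟨x₂, y₂, hw₂, hm₂⟩
  simp only [dfaWK, table, Set.mem_setOf_eq, List.mem_cons, List.not_mem_nil, or_false,
    Prod.mk.injEq, List.mem_singleton] at hm₁ hm₂
  simp only at hw₁ hw₂
  rcases hm₁ with ⟨rfl, rfl, rfl, rfl⟩ | ⟨rfl, rfl, rfl, rfl⟩ | ⟨rfl, rfl, rfl, rfl⟩ <;>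
    rcases hm₂ with ⟨h, rfl, rfl, rfl⟩ | ⟨h, rfl, rfl, rfl⟩ | ⟨h, rfl, rfl, rfl⟩ <;>
    simp_all

lemma dfaWK_run_true : ∀ (l : List (List Letter × List Letter)) (p : Bool),
    IsRun dfaWK l true p → ∃ j, wordOf l = List.replicate j b := by
  intro l
  induction l with
  | nil => intro p _; exact ⟨0, rfl⟩
  | cons e t ih =>
      obtain ⟨x, y⟩ := e
      rintro p ⟨r, hr, hrun⟩
      simp only [dfaWK, table, Set.mem_setOf_eq, List.mem_cons, List.not_mem_nil, or_false,
        Prod.mk.injEq, List.mem_singleton] at hr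
      rcases hr with ⟨h, _, _, _⟩ | ⟨h, _, _, _⟩ | ⟨_, rfl, rfl, rfl⟩
      · exact absurd h (by simp)
      · exact absurd h (by simp)
      obtain ⟨j, hj⟩ := ih p hrun
      exact ⟨j + 1, by simp [wordOf, hj, List.replicate_succ]⟩

lemma dfaWK_run_false : ∀ (l : List (List Letter × List Letter)) (p : Bool),
    IsRun dfaWK l false p → wordOf l ∈ Lbabb := by
  intro l
  induction l with
  | nil => intro p _; exact Or.inr ⟨0, rfl⟩
  | cons e t ih =>
      obtain ⟨x, y⟩ := e
      rintro p ⟨r, hr, hrun⟩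
      simp only [dfaWK, table, Set.mem_setOf_eq, List.mem_cons, List.not_mem_nil, or_false,
        Prod.mk.injEq, List.mem_singleton] at hr
      rcases hr with ⟨_, rfl, rfl, rfl⟩ | ⟨_, rfl, rfl, rfl⟩ | ⟨h, _, _, _⟩
      · rcases ih p hrun with ⟨i, j, hj⟩ | ⟨i, hj⟩
        · exact Or.inl ⟨i + 1, j, by simp [wordOf, hj, List.replicate_succ]⟩
        · exact Or.inr ⟨i + 1, by simp [wordOf, hj, List.replicate_succ]⟩
      · obtain ⟨j, hj⟩ := dfaWK_run_true t p hrun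
        exact Or.inl ⟨0, j, by simp [wordOf, hj]⟩
      · exact absurd h (by simp)

lemma dfaWK_run_rep_b (q : Bool) : ∀ i : ℕ,
    IsRun dfaWK (List.replicate i ([b], ([] : List Letter))) q q := by
  intro i
  induction i with
  | zero => rfl
  | succ i ih =>
      refine ⟨q, ?_, by simpa [List.replicate_succ] using ih⟩
      cases q <;> simp [dfaWK, table]

lemma wordOf_rep_b (i : ℕ) :
    wordOf (List.replicate i ([b], ([] : List Letter))) = List.replicate i b := by
  induction i with
  | zero => rfl
  | succ i ih => simp [List.replicate_succ, wordOf, ih]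

lemma dfaWK_lang : ∀ w : List Letter, w ∈ dfaWK.Lang ↔ w ∈ Lbabb := by
  intro w
  rw [mem_lang_iff]
  constructor
  · rintro ⟨p, _, l, hl, rfl⟩
    exact dfaWK_run_false l p hl
  · rintro (⟨i, j, rfl⟩ | ⟨i, rfl⟩)
    · refine ⟨true, by simp [dfaWK], List.replicate i ([b], []) ++
        ([a], []) :: List.replicate j ([b], []), ?_, ?_⟩
      · refine isRun_append dfaWK _ _ _ false _ (dfaWK_run_rep_b false i)
          ⟨true, by simp [dfaWK, table], dfaWK_run_rep_b true j⟩
      · rw [wordOf_append]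
        have h1 : lhs (List.replicate i (([b], ([] : List Letter)))) = List.replicate i b := by
          induction i with
          | zero => rfl
          | succ i ih => simp [List.replicate_succ, lhs, ih]
        have h2 : rhs (List.replicate i (([b], ([] : List Letter)))) = [] := by
          clear h1
          induction i with
          | zero => rfl
          | succ i ih => simp [List.replicate_succ, rhs, ih]
        simp [wordOf, h1, h2, wordOf_rep_b]
    · exact ⟨false, by simp [dfaWK], List.replicate i ([b], []),
        dfaWK_run_rep_b false i, (wordOf_rep_b i).symm⟩

lemma quasiDet_accepts : AcceptsWith Letter (fun _ A => A.QuasiDet) Lbabb := by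
  refine ⟨Bool, inferInstance, dfaWK, dfaWK_quasiDet, fun w _ => dfaWK_lang w⟩

end WKAux

/-- The regular language `b*ab* + b*` is not accepted by any state-deterministic
sensing 5'→3' WK automaton, but it is accepted by a quasi-deterministic sensing
5'→3' WK automaton (languages compared modulo the empty word). -/
theorem babb_not_stateDet_but_quasiDet :
    ¬ AcceptsWith Letter (fun _ A => A.StateDet) Lbabb ∧
    AcceptsWith Letter (fun _ A => A.QuasiDet) Lbabb :=
  ⟨WKAux.not_stateDet, WKAux.quasiDet_accepts⟩
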